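/- Suppose Q ≺ 0 and the matrix [[Q̄, S̄],[S̄ᵀ, R̄]] is invertible. If a symmetric P ∈ ℝ^{2ml×2ml}, a scalar μ ≥ 0, and matrices Λ, Ψ ∈ ℝ^{m×m} satisfy Gᵀ·diag(−P, P, Λ, Ψ)·G − μ·[[Q̃, S̃],[S̃ᵀ, R̃]] ⪯ 0, then for every (C̃', D̃') ∈ Σ the matrix Hᵀ·diag(−P, P, Λ, Ψ)·H is negative semidefinite, where H is the (4ml+2m)×(2ml+m) matrix with block rows (I_{2ml}, 0), ((Ã; C̃'), (B̃; D̃')), (0, I_m), (C̃', D̃'). -/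

import Mathlib

open Matrix

noncomputable section

/-- A real matrix is negative semidefinite: symmetric and xᵀMx ≤ 0 for all x. -/
def IsNegSemidef {k : Type*} [Fintype k] (M : Matrix k k ℝ) : Prop :=
  M.IsSymm ∧ ∀ x : k → ℝ, x ⬝ᵥ M.mulVec x ≤ 0

/-- A real matrix is positive semidefinite: symmetric and xᵀMx ≥ 0 for all x. -/
def IsPosSemidefR {k : Type*} [Fintype k] (M : Matrix k k ℝ) : Prop :=
  M.IsSymm ∧ ∀ x : k → ℝ, 0 ≤ x ⬝ᵥ M.mulVec x

/-- A real matrix is negative definite. -/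
def IsNegDef {k : Type*} [Fintype k] (M : Matrix k k ℝ) : Prop :=
  M.IsSymm ∧ ∀ x : k → ℝ, x ≠ 0 → x ⬝ᵥ M.mulVec x < 0

/-- Membership of a noise matrix V in the noise set 𝒱. -/
def inNoiseSet {r mv : ℕ} (Q : Matrix (Fin r) (Fin r) ℝ) (S : Matrix (Fin r) (Fin mv) ℝ)
    (R : Matrix (Fin mv) (Fin mv) ℝ) (V : Matrix (Fin mv) (Fin r) ℝ) : Prop :=
  IsPosSemidefR ((Matrix.fromRows Vᵀ (1 : Matrix (Fin mv) (Fin mv) ℝ))ᵀ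
    * Matrix.fromBlocks Q S Sᵀ R * Matrix.fromRows Vᵀ (1 : Matrix (Fin mv) (Fin mv) ℝ))

/-- The noise-weight matrix W = [[Q, S Bᵥᵀ], [Bᵥ Sᵀ, Bᵥ R Bᵥᵀ]]. -/
def Wmat {r m mv : ℕ} (Q : Matrix (Fin r) (Fin r) ℝ) (S : Matrix (Fin r) (Fin mv) ℝ)
    (R : Matrix (Fin mv) (Fin mv) ℝ) (Bv : Matrix (Fin m) (Fin mv) ℝ) :
    Matrix (Fin r ⊕ Fin m) (Fin r ⊕ Fin m) ℝ :=
  Matrix.fromBlocks Q (S * Bvᵀ) (Bv * Sᵀ) (Bv * R * Bvᵀ)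

/-- The data matrix M = [[(Ξ; U_Ξ), 0], [Y_Ξ, I]]. -/
def MdataF {t m r : ℕ} (Xi : Matrix (Fin t) (Fin r) ℝ) (UXi YXi : Matrix (Fin m) (Fin r) ℝ) :
    Matrix ((Fin t ⊕ Fin m) ⊕ Fin m) (Fin r ⊕ Fin m) ℝ :=
  Matrix.fromBlocks (Matrix.fromRows Xi UXi) 0 YXi 1

/-- The matrix [[Q̄, S̄], [S̄ᵀ, R̄]] = M W Mᵀ. -/
def QSRF {t m mv r : ℕ} (Xi : Matrix (Fin t) (Fin r) ℝ) (UXi YXi : Matrix (Fin m) (Fin r) ℝ)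
    (Q : Matrix (Fin r) (Fin r) ℝ) (S : Matrix (Fin r) (Fin mv) ℝ)
    (R : Matrix (Fin mv) (Fin mv) ℝ) (Bv : Matrix (Fin m) (Fin mv) ℝ) :
    Matrix ((Fin t ⊕ Fin m) ⊕ Fin m) ((Fin t ⊕ Fin m) ⊕ Fin m) ℝ :=
  MdataF Xi UXi YXi * Wmat Q S R Bv * (MdataF Xi UXi YXi)ᵀ

/-- The matrix F with block rows (I, 0), (0, I), (C̃', D̃'). -/
def Fmat {t m : ℕ} (C' : Matrix (Fin m) (Fin t) ℝ) (D' : Matrix (Fin m) (Fin m) ℝ) :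
    Matrix ((Fin t ⊕ Fin m) ⊕ Fin m) (Fin t ⊕ Fin m) ℝ :=
  Matrix.fromRows (1 : Matrix (Fin t ⊕ Fin m) (Fin t ⊕ Fin m) ℝ) (Matrix.fromCols C' D')

/-- Identification of the row index of a stacked matrix (X; Y), X with t − m rows and Y with m
rows, with Fin t: the first t − m coordinates then the last m coordinates. -/
def stackIdx {t m : ℕ} (h : m ≤ t) : (Fin (t - m) ⊕ Fin m) → Fin t :=
  Sum.elim (fun i => ⟨i.1, by have := i.2; omega⟩) (fun a => ⟨t - m + a.1, by have := a.2; omega⟩)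

/-- The matrix G with block rows (I,0,0), ((Ã;0),(B̃;0),(0;I)), (0,I,0), (0,0,I). -/
def G19 {t m : ℕ} (Atil : Matrix (Fin (t - m)) (Fin t) ℝ) (Btil : Matrix (Fin (t - m)) (Fin m) ℝ) :
    Matrix ((Fin t ⊕ (Fin (t - m) ⊕ Fin m)) ⊕ (Fin m ⊕ Fin m)) ((Fin t ⊕ Fin m) ⊕ Fin m) ℝ :=
  Matrix.fromRows
    (Matrix.fromRows
      (Matrix.fromCols (Matrix.fromCols 1 0) 0)
      (Matrix.fromRows
        (Matrix.fromCols (Matrix.fromCols Atil Btil) 0)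
        (Matrix.fromCols (Matrix.fromCols 0 0) 1)))
    (Matrix.fromRows
      (Matrix.fromCols (Matrix.fromCols 0 1) 0)
      (Matrix.fromCols (Matrix.fromCols 0 0) 1))

/-- The matrix H with block rows (I,0), ((Ã;C̃'),(B̃;D̃')), (0,I), (C̃',D̃'). -/
def H19 {t m : ℕ} (Atil : Matrix (Fin (t - m)) (Fin t) ℝ) (Btil : Matrix (Fin (t - m)) (Fin m) ℝ)
    (C' : Matrix (Fin m) (Fin t) ℝ) (D' : Matrix (Fin m) (Fin m) ℝ) :
    Matrix ((Fin t ⊕ (Fin (t - m) ⊕ Fin m)) ⊕ (Fin m ⊕ Fin m)) (Fin t ⊕ Fin m) ℝ :=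
  Matrix.fromRows
    (Matrix.fromRows
      (Matrix.fromCols 1 0)
      (Matrix.fromRows
        (Matrix.fromCols Atil Btil)
        (Matrix.fromCols C' D')))
    (Matrix.fromRows
      (Matrix.fromCols 0 1)
      (Matrix.fromCols C' D'))

/-- The block-diagonal multiplier diag(−P, P, Λ, Ψ), where the second copy of P is taken in the
coordinates of the stacked vector ((Ã; C̃')ξ + (B̃; D̃')u). -/
def Phi19 {t m : ℕ} (h : m ≤ t) (P : Matrix (Fin t) (Fin t) ℝ) (Λ Ψ : Matrix (Fin m) (Fin m) ℝ) :
    Matrix ((Fin t ⊕ (Fin (t - m) ⊕ Fin m)) ⊕ (Fin m ⊕ Fin m))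
      ((Fin t ⊕ (Fin (t - m) ⊕ Fin m)) ⊕ (Fin m ⊕ Fin m)) ℝ :=
  Matrix.fromBlocks
    (Matrix.fromBlocks (-P) 0 0 (P.submatrix (stackIdx h) (stackIdx h))) 0 0
    (Matrix.fromBlocks Λ 0 0 Ψ)
set_option maxHeartbeats 1000000 in
lemma quad_conj {p q : Type*} [Fintype p] [Fintype q] (M : Matrix p q ℝ) (W : Matrix q q ℝ)
    (x : p → ℝ) : x ⬝ᵥ (M * W * Mᵀ) *ᵥ x = (Mᵀ *ᵥ x) ⬝ᵥ W *ᵥ (Mᵀ *ᵥ x) := by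
  rw [← mulVec_mulVec, ← mulVec_mulVec, dotProduct_mulVec, ← mulVec_transpose]

set_option maxHeartbeats 2000000 in
lemma keyA {n : Type*} [Fintype n] [DecidableEq n]
    (T : Matrix n n ℝ) (hsym : T.IsSymm) (hdet : IsUnit T.det)
    (E V : Submodule ℝ (n → ℝ))
    (hdim : Fintype.card n ≤ Module.finrank ℝ E + Module.finrank ℝ V)
    (hE : ∀ x ∈ E, x ⬝ᵥ T *ᵥ x ≤ 0)
    (hV : ∀ x ∈ V, 0 ≤ x ⬝ᵥ T *ᵥ x)
    (u : n → ℝ) (hu : ∀ x ∈ V, u ⬝ᵥ x = 0) :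
    u ⬝ᵥ T⁻¹ *ᵥ u ≤ 0 := by
  classical
  have hherm : T.IsHermitian := by
    rw [Matrix.IsHermitian, Matrix.conjTranspose]; ext i j; simpa using congrFun (congrFun hsym i) j
  set e : n → ℝ := hherm.eigenvalues with he
  set U : Matrix n n ℝ := (hherm.eigenvectorUnitary : Matrix n n ℝ) with hU
  have hstar : star U = Uᵀ := by ext i j; simp [Matrix.star_apply]
  have hspec : T = U * diagonal e * Uᵀ := by
    have := hherm.spectral_theorem
    rw [Unitary.conjStarAlgAut_apply, hstar] at this
    simpa [Function.comp] using this
  have hUU : U * Uᵀ = 1 := by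
    have := Matrix.mem_unitaryGroup_iff.mp hherm.eigenvectorUnitary.2
    rwa [hstar] at this
  set c : (n → ℝ) → (n → ℝ) := fun x => x ᵥ* U with hc
  have hquad : ∀ x, x ⬝ᵥ T *ᵥ x = ∑ i, e i * (c x i)^2 := by
    intro x
    rw [hspec, quad_conj, mulVec_transpose]
    simp only [hc, dotProduct, mulVec_diagonal, mulVec_transpose]
    congr 1; ext i; ring
  have hx0 : ∀ x, c x = 0 → x = 0 := by
    intro x hx
    have : x ᵥ* (U * Uᵀ) = 0 := by
      rw [← Matrix.vecMul_vecMul, show x ᵥ* U = c x from rfl, hx, Matrix.zero_vecMul]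
    rwa [hUU, Matrix.vecMul_one] at this
  have hne : ∀ i, e i ≠ 0 := by
    intro i hi
    have hdp : T.det = ∏ j, e j := by simpa using hherm.det_eq_prod_eigenvalues
    have hd0 : T.det ≠ 0 := hdet.ne_zero
    rw [hdp] at hd0
    exact hd0 (Finset.prod_eq_zero (Finset.mem_univ i) hi)
  have extract : ∀ (Sb : Submodule ℝ (n → ℝ)) (p : n → Prop) (_ : DecidablePred p),
      Fintype.card {i // p i} < Module.finrank ℝ Sb →
      ∃ x, x ∈ Sb ∧ x ≠ 0 ∧ ∀ i, p i → c x i = 0 := by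
    intro Sb p hp hlt
    set φ : ↥Sb →ₗ[ℝ] ({i // p i} → ℝ) :=
      (LinearMap.funLeft ℝ ℝ (Subtype.val)).comp ((Matrix.mulVecLin Uᵀ).comp Sb.subtype) with hφ
    have hni : ¬ Function.Injective φ := by
      intro hinj
      have h1 := LinearMap.finrank_le_finrank_of_injective hinj
      rw [Module.finrank_pi] at h1
      omega
    rw [← LinearMap.ker_eq_bot] at hni
    obtain ⟨x, hxk, hx0'⟩ := (Submodule.ne_bot_iff _).mp hni
    refine ⟨↑x, x.2, by simpa using hx0', ?_⟩
    intro i hi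
    have h2 := congrFun (LinearMap.mem_ker.mp hxk) ⟨i, hi⟩
    simp only [hφ, LinearMap.comp_apply, LinearMap.funLeft_apply, Matrix.mulVecLin_apply,
      Submodule.coe_subtype, Pi.zero_apply] at h2
    rw [Matrix.mulVec_transpose] at h2
    exact h2
  have hcardNeg : Module.finrank ℝ E ≤ Fintype.card {i // e i < 0} := by
    by_contra hlt
    push_neg at hlt
    obtain ⟨x, hxE, hx0', hxc⟩ := extract E (fun i => e i < 0) (by infer_instance) hlt
    have hposq : 0 < x ⬝ᵥ T *ᵥ x := by
      rw [hquad]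
      obtain ⟨i0, hi0⟩ : ∃ i, c x i ≠ 0 := by
        by_contra hall; push_neg at hall
        exact hx0' (hx0 x (funext hall))
      have hi0' : 0 < e i0 := by
        rcases lt_trichotomy (e i0) 0 with h | h | h
        · exact absurd (hxc i0 h) hi0
        · exact absurd h (hne i0)
        · exact h
      have h0 : (0:ℝ) = ∑ _i : n, 0 := by simp
      rw [h0]
      refine Finset.sum_lt_sum (fun i _ => ?_) ⟨i0, Finset.mem_univ i0, ?_⟩
      · rcases lt_trichotomy (e i) 0 with h | h | h
        · simp [hxc i h]
        · exact absurd h (hne i)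
        · positivity
      · have := sq_pos_of_ne_zero hi0
        nlinarith
    exact absurd (hE x hxE) (not_le.mpr hposq)
  have hcardPos : Fintype.card {i // 0 < e i} + Fintype.card {i // e i < 0} = Fintype.card n := by
    have h1 : Fintype.card {i // e i < 0} = Fintype.card {i // ¬ 0 < e i} := by
      apply Fintype.card_congr
      apply Equiv.subtypeEquivRight
      intro i
      constructor
      · intro h; exact not_lt.mpr h.le
      · intro h; rcases lt_trichotomy (e i) 0 with h' | h' | h'
        · exact h'
        · exact absurd h' (hne i)
        · exact absurd h' h
    rw [h1, Fintype.card_subtype_compl]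
    have := Fintype.card_subtype_le (fun i => 0 < e i)
    omega
  by_contra hpos
  push_neg at hpos
  set w : n → ℝ := T⁻¹ *ᵥ u with hw
  have hTw : T *ᵥ w = u := by
    rw [hw, mulVec_mulVec, Matrix.mul_nonsing_inv T hdet, one_mulVec]
  have huw : 0 < u ⬝ᵥ w := hpos
  have hwV : w ∉ V := fun h => absurd (hu w h) (ne_of_gt huw)
  have hw0 : w ≠ 0 := by
    intro h; rw [h, dotProduct_zero] at huw; exact lt_irrefl 0 huw
  set Sb := V ⊔ Submodule.span ℝ {w} with hSb
  have hinf : V ⊓ Submodule.span ℝ {w} = ⊥ := by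
    rw [Submodule.eq_bot_iff]
    rintro x ⟨hxV, hxs⟩
    obtain ⟨a, rfl⟩ := Submodule.mem_span_singleton.mp hxs
    rcases eq_or_ne a 0 with h | h
    · simp [h]
    · exact absurd (by simpa [smul_smul, inv_mul_cancel₀ h] using V.smul_mem a⁻¹ hxV : w ∈ V) hwV
  have hrank : Module.finrank ℝ Sb = Module.finrank ℝ V + 1 := by
    have h3 := Submodule.finrank_sup_add_finrank_inf_eq V (Submodule.span ℝ {w})
    rw [hinf, finrank_span_singleton hw0] at h3
    simpa using h3
  have hlt : Fintype.card {i // 0 < e i} < Module.finrank ℝ Sb := by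
    rw [hrank]; omega
  obtain ⟨x, hxS, hx0', hxc⟩ := extract Sb (fun i => 0 < e i) (by infer_instance) hlt
  have hneg : x ⬝ᵥ T *ᵥ x < 0 := by
    rw [hquad]
    obtain ⟨i0, hi0⟩ : ∃ i, c x i ≠ 0 := by
      by_contra hall; push_neg at hall
      exact hx0' (hx0 x (funext hall))
    have hi0' : e i0 < 0 := by
      rcases lt_trichotomy (e i0) 0 with h | h | h
      · exact h
      · exact absurd h (hne i0)
      · exact absurd (hxc i0 h) hi0
    have h0 : (0:ℝ) = ∑ _i : n, 0 := by simp
    rw [h0]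
    refine Finset.sum_lt_sum (fun i _ => ?_) ⟨i0, Finset.mem_univ i0, ?_⟩
    · rcases lt_trichotomy (e i) 0 with h | h | h
      · nlinarith [sq_nonneg (c x i)]
      · exact absurd h (hne i)
      · simp [hxc i h]
    · have := sq_pos_of_ne_zero hi0
      nlinarith
  have hnn : 0 ≤ x ⬝ᵥ T *ᵥ x := by
    obtain ⟨v, hvV, y, hys, hvy⟩ := Submodule.mem_sup.mp hxS
    obtain ⟨a, rfl⟩ := Submodule.mem_span_singleton.mp hys
    have hvTw : v ⬝ᵥ T *ᵥ w = 0 := by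
      rw [hTw, dotProduct_comm]; exact hu v hvV
    have hwTv : w ⬝ᵥ T *ᵥ v = 0 := by
      rw [dotProduct_mulVec, ← Matrix.mulVec_transpose, hsym.eq, hTw]
      exact hu v hvV
    have hwTw : 0 < w ⬝ᵥ T *ᵥ w := by rwa [hTw, dotProduct_comm]
    have hvTv : 0 ≤ v ⬝ᵥ T *ᵥ v := hV v hvV
    rw [← hvy]
    simp only [Matrix.mulVec_add, Matrix.mulVec_smul, dotProduct_add, add_dotProduct,
      dotProduct_smul, smul_dotProduct, smul_eq_mul]
    rw [hvTw, hwTv]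
    nlinarith [mul_nonneg (mul_self_nonneg a) (le_of_lt hwTw), hvTv]
  linarith

lemma quad_conj2 {p q : Type*} [Fintype p] [Fintype q] (A : Matrix p q ℝ) (X : Matrix p p ℝ)
    (y : q → ℝ) : y ⬝ᵥ (Aᵀ * X * A) *ᵥ y = (A *ᵥ y) ⬝ᵥ X *ᵥ (A *ᵥ y) := by
  simpa using quad_conj Aᵀ X y

lemma conj_comp {a b d : Type*} [Fintype a] [Fintype b] (G : Matrix a b ℝ) (F : Matrix b d ℝ)
    (Φ : Matrix a a ℝ) : (G * F)ᵀ * Φ * (G * F) = Fᵀ * (Gᵀ * Φ * G) * F := by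
  simp [Matrix.transpose_mul, Matrix.mul_assoc]

lemma conj_T {a b : Type*} [Fintype a] (H : Matrix a b ℝ) (Φ : Matrix a a ℝ) :
    (Hᵀ * Φ * H)ᵀ = Hᵀ * Φᵀ * H := by
  rw [Matrix.transpose_mul, Matrix.transpose_mul, Matrix.transpose_transpose, Matrix.mul_assoc]

lemma core {a b d : Type*} [Fintype a] [Fintype b] [Fintype d] [DecidableEq b]
    (G' : Matrix a b ℝ) (Φ : Matrix a a ℝ) (T : Matrix b b ℝ) (F : Matrix b d ℝ)
    (μ : ℝ) (hμ : 0 ≤ μ)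
    (hTsym : T.IsSymm) (hTdet : IsUnit T.det)
    (E V : Submodule ℝ (b → ℝ))
    (hdim : Fintype.card b ≤ Module.finrank ℝ E + Module.finrank ℝ V)
    (hE : ∀ x ∈ E, x ⬝ᵥ T *ᵥ x ≤ 0)
    (hV : ∀ x ∈ V, 0 ≤ x ⬝ᵥ T *ᵥ x)
    (hperp : ∀ (y : d → ℝ), ∀ x ∈ V, (F *ᵥ y) ⬝ᵥ x = 0)
    (hLMI : IsNegSemidef (G'ᵀ * Φ * G' - μ • T⁻¹)) :
    IsNegSemidef ((G' * F)ᵀ * Φ * (G' * F)) := by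
  have hTi : (T⁻¹).IsSymm := by
    rw [Matrix.IsSymm, Matrix.transpose_nonsing_inv, hTsym.eq]
  have hG : G'ᵀ * Φᵀ * G' = G'ᵀ * Φ * G' := by
    have h := hLMI.1
    rw [Matrix.IsSymm, Matrix.transpose_sub, Matrix.transpose_smul, hTi.eq, conj_T] at h
    exact sub_left_inj.mp h
  constructor
  · rw [Matrix.IsSymm, conj_T, conj_comp, conj_comp, hG]
  · intro y
    have e1 : y ⬝ᵥ ((G' * F)ᵀ * Φ * (G' * F)) *ᵥ y
        = (F *ᵥ y) ⬝ᵥ (G'ᵀ * Φ * G') *ᵥ (F *ᵥ y) := by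
      rw [conj_comp, quad_conj2]
    have e2 : (F *ᵥ y) ⬝ᵥ (G'ᵀ * Φ * G') *ᵥ (F *ᵥ y)
        = (F *ᵥ y) ⬝ᵥ (G'ᵀ * Φ * G' - μ • T⁻¹) *ᵥ (F *ᵥ y)
          + μ * ((F *ᵥ y) ⬝ᵥ T⁻¹ *ᵥ (F *ᵥ y)) := by
      rw [Matrix.sub_mulVec, dotProduct_sub, Matrix.smul_mulVec, dotProduct_smul,
        smul_eq_mul]
      ring
    have h1 := hLMI.2 (F *ᵥ y)
    have h2 := keyA T hTsym hTdet E V hdim hE hV (F *ᵥ y) (hperp y)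
    rw [e1, e2]
    nlinarith

lemma HGF {t m : ℕ} (Atil : Matrix (Fin (t - m)) (Fin t) ℝ) (Btil : Matrix (Fin (t - m)) (Fin m) ℝ)
    (C' : Matrix (Fin m) (Fin t) ℝ) (D' : Matrix (Fin m) (Fin m) ℝ) :
    H19 Atil Btil C' D' = G19 Atil Btil * Fmat C' D' := by
  unfold H19 G19 Fmat
  simp only [Matrix.fromRows_mul, Matrix.fromCols_mul_fromRows, Matrix.mul_one,
    Matrix.zero_mul, Matrix.one_mul, Matrix.fromCols_zero, add_zero, zero_add]

/-- If the robust LMI Gᵀ·diag(−P,P,Λ,Ψ)·G − μ·[[Q̃,S̃],[S̃ᵀ,R̃]] ⪯ 0 holds for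
some symmetric P and μ ≥ 0, then for every (C̃', D̃') ∈ Σ the matrix Hᵀ·diag(−P,P,Λ,Ψ)·H is
negative semidefinite. -/

theorem stmt19 {N l m mv : ℕ} (hN : 1 ≤ N) (hl : 1 ≤ l) (hm : 1 ≤ m) (hmv : 1 ≤ mv)
    (Xi : Matrix (Fin (2 * m * l)) (Fin (N - l)) ℝ)
    (UXi YXi : Matrix (Fin m) (Fin (N - l)) ℝ)
    (Bv : Matrix (Fin m) (Fin mv) ℝ)
    (Q : Matrix (Fin (N - l)) (Fin (N - l)) ℝ) (S : Matrix (Fin (N - l)) (Fin mv) ℝ)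
    (R : Matrix (Fin mv) (Fin mv) ℝ) (hQ : IsNegDef Q) (hR : R.IsSymm)
    (Atil : Matrix (Fin (2 * m * l - m)) (Fin (2 * m * l)) ℝ)
    (Btil : Matrix (Fin (2 * m * l - m)) (Fin m) ℝ)
    (hinv : IsUnit (QSRF Xi UXi YXi Q S R Bv).det)
    (P : Matrix (Fin (2 * m * l)) (Fin (2 * m * l)) ℝ) (hP : P.IsSymm)
    (μ : ℝ) (hμ : 0 ≤ μ)
    (Λ Ψ : Matrix (Fin m) (Fin m) ℝ)
    (hLMI : IsNegSemidef
      ((G19 Atil Btil)ᵀ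
          * Phi19 (by have := Nat.mul_le_mul (le_refl (2 * m)) hl; omega : m ≤ 2 * m * l) P Λ Ψ
          * G19 Atil Btil
        - μ • (QSRF Xi UXi YXi Q S R Bv)⁻¹)) :
    ∀ (C' : Matrix (Fin m) (Fin (2 * m * l)) ℝ) (D' : Matrix (Fin m) (Fin m) ℝ),
      (∃ V : Matrix (Fin mv) (Fin (N - l)) ℝ, inNoiseSet Q S R V ∧
        YXi = C' * Xi + D' * UXi + Bv * V) →
      IsNegSemidef
        ((H19 Atil Btil C' D')ᵀ
          * Phi19 (by have := Nat.mul_le_mul (le_refl (2 * m)) hl; omega : m ≤ 2 * m * l) P Λ Ψ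
          * H19 Atil Btil C' D') := by
  intro C' D' hmem
  obtain ⟨V, hVn, hY⟩ := hmem
  classical
  set T := QSRF Xi UXi YXi Q S R Bv with hT
  have hWsym : (Wmat Q S R Bv).IsSymm := by
    rw [Matrix.IsSymm, Wmat, Matrix.fromBlocks_transpose]
    simp [Matrix.transpose_mul, hQ.1.eq, hR.eq, Matrix.mul_assoc]
  have hTsym : T.IsSymm := by
    rw [hT, Matrix.IsSymm, QSRF, Matrix.transpose_mul, Matrix.transpose_mul,
      Matrix.transpose_transpose, hWsym.eq, Matrix.mul_assoc]
  -- the two subspaces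
  set Me : Matrix ((Fin (2 * m * l) ⊕ Fin m) ⊕ Fin m) (Fin (2 * m * l) ⊕ Fin m) ℝ :=
    Matrix.fromRows 1 0 with hMe
  set Mv : Matrix ((Fin (2 * m * l) ⊕ Fin m) ⊕ Fin m) (Fin m) ℝ :=
    Matrix.fromRows (Matrix.fromRows (-(C'ᵀ)) (-(D'ᵀ))) 1 with hMv
  set E := LinearMap.range (Matrix.mulVecLin Me) with hE'
  set Vs := LinearMap.range (Matrix.mulVecLin Mv) with hVs'
  have hMeApp : ∀ z, Me *ᵥ z = z ⊕ᵥ (0 : Fin m → ℝ) := by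
    intro z
    rw [hMe, Matrix.fromRows_mulVec, Matrix.one_mulVec, Matrix.zero_mulVec]
  have hMvApp : ∀ v, Mv *ᵥ v = ((-(C'ᵀ *ᵥ v)) ⊕ᵥ (-(D'ᵀ *ᵥ v))) ⊕ᵥ v := by
    intro v
    rw [hMv, Matrix.fromRows_mulVec, Matrix.fromRows_mulVec, Matrix.one_mulVec,
      Matrix.neg_mulVec, Matrix.neg_mulVec]
  have hEinj : Function.Injective (Matrix.mulVecLin Me) := by
    intro x y h
    have hx := congrArg (fun f => f ∘ Sum.inl) h
    simp only [Matrix.mulVecLin_apply, hMeApp, Sum.elim_comp_inl] at hx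
    exact hx
  have hVinj : Function.Injective (Matrix.mulVecLin Mv) := by
    intro x y h
    have hx := congrArg (fun f => f ∘ Sum.inr) h
    simp only [Matrix.mulVecLin_apply, hMvApp, Sum.elim_comp_inr] at hx
    exact hx
  have hrankE : Module.finrank ℝ E = 2 * m * l + m := by
    rw [hE', LinearMap.finrank_range_of_inj hEinj, Module.finrank_pi]
    simp
  have hrankV : Module.finrank ℝ Vs = m := by
    rw [hVs', LinearMap.finrank_range_of_inj hVinj, Module.finrank_pi]
    simp
  have hdim : Fintype.card ((Fin (2 * m * l) ⊕ Fin m) ⊕ Fin m)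
      ≤ Module.finrank ℝ E + Module.finrank ℝ Vs := by
    rw [hrankE, hrankV]
    simp
  have hEquad : ∀ x ∈ E, x ⬝ᵥ T *ᵥ x ≤ 0 := by
    rintro x ⟨z, rfl⟩
    rw [Matrix.mulVecLin_apply, hMeApp, hT, QSRF, quad_conj]
    have hMT : (MdataF Xi UXi YXi)ᵀ *ᵥ (z ⊕ᵥ (0 : Fin m → ℝ))
        = ((Matrix.fromRows Xi UXi)ᵀ *ᵥ z) ⊕ᵥ (0 : Fin m → ℝ) := by
      rw [MdataF, Matrix.fromBlocks_transpose, Matrix.fromBlocks_mulVec]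
      simp
    rw [hMT, Wmat, Matrix.fromBlocks_mulVec]
    simp only [Sum.elim_comp_inl, Sum.elim_comp_inr, Matrix.mulVec_zero, add_zero,
      sumElim_dotProduct_sumElim, zero_dotProduct, zero_dotProduct]
    set a := (Matrix.fromRows Xi UXi)ᵀ *ᵥ z with ha
    rcases eq_or_ne a 0 with h | h
    · simp [h]
    · linarith [hQ.2 a h]
  have hVquad : ∀ x ∈ Vs, 0 ≤ x ⬝ᵥ T *ᵥ x := by
    rintro x ⟨v, rfl⟩
    rw [Matrix.mulVecLin_apply, hMvApp, hT, QSRF, quad_conj]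
    have hMT : (MdataF Xi UXi YXi)ᵀ *ᵥ (((-(C'ᵀ *ᵥ v)) ⊕ᵥ (-(D'ᵀ *ᵥ v))) ⊕ᵥ v)
        = (Vᵀ *ᵥ (Bvᵀ *ᵥ v)) ⊕ᵥ v := by
      rw [MdataF, Matrix.fromBlocks_transpose, Matrix.fromBlocks_mulVec]
      simp only [Sum.elim_comp_inl, Sum.elim_comp_inr, Matrix.transpose_zero,
        Matrix.transpose_one, Matrix.zero_mulVec, Matrix.one_mulVec, zero_add, add_zero]
      rw [Matrix.transpose_fromRows, Matrix.fromCols_mulVec_sumElim, hY,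
        Matrix.transpose_add, Matrix.transpose_add, Matrix.transpose_mul,
        Matrix.transpose_mul, Matrix.transpose_mul, Matrix.add_mulVec, Matrix.add_mulVec,
        Matrix.mulVec_neg, Matrix.mulVec_neg, ← Matrix.mulVec_mulVec,
        ← Matrix.mulVec_mulVec, ← Matrix.mulVec_mulVec]
      funext i
      rcases i with i | i
      · simp only [Sum.elim_inl, Pi.add_apply, Pi.neg_apply]
        ring
      · rfl
    rw [hMT, Wmat, Matrix.fromBlocks_mulVec]
    simp only [Sum.elim_comp_inl, Sum.elim_comp_inr, sumElim_dotProduct_sumElim,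
      dotProduct_add, dotProduct_add]
    have hn := hVn.2 (Bvᵀ *ᵥ v)
    rw [quad_conj2, Matrix.fromRows_mulVec, Matrix.one_mulVec, Matrix.fromBlocks_mulVec] at hn
    simp only [Sum.elim_comp_inl, Sum.elim_comp_inr, sumElim_dotProduct_sumElim,
      dotProduct_add, dotProduct_add] at hn
    have t1 : (Vᵀ *ᵥ (Bvᵀ *ᵥ v)) ⬝ᵥ (S * Bvᵀ) *ᵥ v = (Vᵀ *ᵥ (Bvᵀ *ᵥ v)) ⬝ᵥ S *ᵥ (Bvᵀ *ᵥ v) := by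
      rw [← Matrix.mulVec_mulVec]
    have t2 : v ⬝ᵥ (Bv * Sᵀ) *ᵥ (Vᵀ *ᵥ (Bvᵀ *ᵥ v)) = (Bvᵀ *ᵥ v) ⬝ᵥ Sᵀ *ᵥ (Vᵀ *ᵥ (Bvᵀ *ᵥ v)) := by
      rw [← Matrix.mulVec_mulVec, Matrix.dotProduct_mulVec v Bv, ← Matrix.mulVec_transpose]
    have t3 : v ⬝ᵥ (Bv * R * Bvᵀ) *ᵥ v = (Bvᵀ *ᵥ v) ⬝ᵥ R *ᵥ (Bvᵀ *ᵥ v) := quad_conj Bv R v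
    rw [t1, t2, t3]
    linarith
  have hperp : ∀ (y : (Fin (2 * m * l) ⊕ Fin m) → ℝ), ∀ x ∈ Vs, (Fmat C' D' *ᵥ y) ⬝ᵥ x = 0 := by
    rintro y x ⟨v, rfl⟩
    rw [Matrix.mulVecLin_apply, hMvApp, Fmat, Matrix.fromRows_mulVec, Matrix.one_mulVec]
    rw [show y = (y ∘ Sum.inl) ⊕ᵥ (y ∘ Sum.inr) from (Sum.elim_comp_inl_inr y).symm,
      Matrix.fromCols_mulVec_sumElim, sumElim_dotProduct_sumElim,
      sumElim_dotProduct_sumElim]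
    simp only [dotProduct_neg, dotProduct_neg, add_dotProduct, add_dotProduct]
    rw [Matrix.dotProduct_mulVec (y ∘ Sum.inl) C'ᵀ, Matrix.vecMul_transpose,
      Matrix.dotProduct_mulVec (y ∘ Sum.inr) D'ᵀ, Matrix.vecMul_transpose]
    ring
  rw [HGF]
  exact core (G19 Atil Btil) _ T (Fmat C' D') μ hμ hTsym hinv E Vs hdim hEquad hVquad hperp hLMI

end
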